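/- For every real k > 0, ∫₀^π arctan(sin φ / k)·sin φ dφ = π·(√(k² + 1) − k). -/

import Mathlib

open Real

set_option maxHeartbeats 1600000 in
/-- The definite-integral identity used for the hemisphere billiard bound:
`∫₀^π arctan(sin φ / k)·sin φ dφ = π·(√(k² + 1) − k)` for `k > 0`. -/
theorem integral_arctan_sin_div (k : ℝ) (hk : 0 < k) :
    ∫ φ in (0 : ℝ)..π, Real.arctan (Real.sin φ / k) * Real.sin φ =
      π * (Real.sqrt (k ^ 2 + 1) - k) := by
  have hk0 : k ≠ 0 := ne_of_gt hk
  set r : ℝ := Real.sqrt (k ^ 2 + 1) with hrdef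
  have hr2 : r ^ 2 = k ^ 2 + 1 := Real.sq_sqrt (by positivity)
  have hr0 : 0 < r := Real.sqrt_pos.mpr (by positivity)
  set F : ℝ → ℝ := fun φ =>
    -Real.cos φ * Real.arctan (Real.sin φ / k) - k * φ +
      r * (φ + Real.arctan (((r - k) * Real.sin φ * Real.cos φ) /
        (k * Real.cos φ ^ 2 + r * Real.sin φ ^ 2))) with hF
  have hderiv : ∀ φ : ℝ, HasDerivAt F (Real.arctan (Real.sin φ / k) * Real.sin φ) φ := by
    intro φ
    set s := Real.sin φ with hs
    set t := Real.cos φ with ht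
    have hst : s ^ 2 + t ^ 2 = 1 := sin_sq_add_cos_sq φ
    have hD : 0 < k * t ^ 2 + r * s ^ 2 := by
      have hm : 0 < min k r := lt_min hk hr0
      nlinarith [mul_nonneg (sub_nonneg.mpr (min_le_left k r)) (sq_nonneg t),
        mul_nonneg (sub_nonneg.mpr (min_le_right k r)) (sq_nonneg s)]
    have hDne : k * t ^ 2 + r * s ^ 2 ≠ 0 := ne_of_gt hD
    have hsin : HasDerivAt Real.sin t φ := Real.hasDerivAt_sin φ
    have hcos : HasDerivAt Real.cos (-s) φ := Real.hasDerivAt_cos φ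
    -- inner numerator
    have hN : HasDerivAt (fun x => (r - k) * Real.sin x * Real.cos x)
        ((r - k) * t * t + (r - k) * s * (-s)) φ := by
      simpa using (((hasDerivAt_const φ (r - k)).fun_mul hsin).fun_mul hcos)
    have hDen : HasDerivAt (fun x => k * Real.cos x ^ 2 + r * Real.sin x ^ 2)
        (k * (2 * t * (-s)) + r * (2 * s * t)) φ := by
      have h1 : HasDerivAt (fun x => Real.cos x ^ 2) (2 * t * (-s)) φ := by
        simpa using hcos.fun_pow 2
      have h2 : HasDerivAt (fun x => Real.sin x ^ 2) (2 * s * t) φ := by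
        simpa using hsin.fun_pow 2
      exact ((h1.const_mul k).add (h2.const_mul r))
    have hu : HasDerivAt (fun x => ((r - k) * Real.sin x * Real.cos x) /
        (k * Real.cos x ^ 2 + r * Real.sin x ^ 2))
        ((((r - k) * t * t + (r - k) * s * (-s)) * (k * t ^ 2 + r * s ^ 2) -
          ((r - k) * s * t) * (k * (2 * t * (-s)) + r * (2 * s * t))) /
          (k * t ^ 2 + r * s ^ 2) ^ 2) φ := hN.div hDen hDne
    have harct : HasDerivAt (fun x => Real.arctan (((r - k) * Real.sin x * Real.cos x) /
        (k * Real.cos x ^ 2 + r * Real.sin x ^ 2)))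
        (1 / (1 + (((r - k) * s * t) / (k * t ^ 2 + r * s ^ 2)) ^ 2) *
          ((((r - k) * t * t + (r - k) * s * (-s)) * (k * t ^ 2 + r * s ^ 2) -
          ((r - k) * s * t) * (k * (2 * t * (-s)) + r * (2 * s * t))) /
          (k * t ^ 2 + r * s ^ 2) ^ 2)) φ := hu.arctan
    have hat1 : HasDerivAt (fun x => Real.arctan (Real.sin x / k))
        (1 / (1 + (s / k) ^ 2) * (t / k)) φ := (hsin.div_const k).arctan
    have hmain : HasDerivAt F
        (-(-s) * Real.arctan (s / k) + -t * (1 / (1 + (s / k) ^ 2) * (t / k)) - k * 1 +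
          r * (1 + 1 / (1 + (((r - k) * s * t) / (k * t ^ 2 + r * s ^ 2)) ^ 2) *
          ((((r - k) * t * t + (r - k) * s * (-s)) * (k * t ^ 2 + r * s ^ 2) -
          ((r - k) * s * t) * (k * (2 * t * (-s)) + r * (2 * s * t))) /
          (k * t ^ 2 + r * s ^ 2) ^ 2))) φ := by
      exact (((hcos.neg.mul hat1).sub ((hasDerivAt_id φ).const_mul k)).add
        (((hasDerivAt_id φ).add harct).const_mul r))
    have key : -t * (1 / (1 + (s / k) ^ 2) * (t / k)) - k * 1 +
          r * (1 + 1 / (1 + (((r - k) * s * t) / (k * t ^ 2 + r * s ^ 2)) ^ 2) *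
          ((((r - k) * t * t + (r - k) * s * (-s)) * (k * t ^ 2 + r * s ^ 2) -
          ((r - k) * s * t) * (k * (2 * t * (-s)) + r * (2 * s * t))) /
          (k * t ^ 2 + r * s ^ 2) ^ 2)) = 0 := by
      have h1 : (1:ℝ) + (s/k)^2 ≠ 0 := by positivity
      have h2 : (1:ℝ) + (((r - k) * s * t) / (k * t ^ 2 + r * s ^ 2)) ^ 2 ≠ 0 := by positivity
      have hS : ((k * t ^ 2 + r * s ^ 2) ^ 2 + ((r - k) * s * t) ^ 2) ≠ 0 := by positivity
      have hQ : k * (k ^ 2 + s ^ 2) * ((k * t ^ 2 + r * s ^ 2) ^ 2 + ((r - k) * s * t) ^ 2) ≠ 0 := by positivity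
      have hP : (-(t ^ 2 * k ^ 2 * ((k * t ^ 2 + r * s ^ 2) ^ 2 + ((r - k) * s * t) ^ 2)) + (r - k) * k * (k ^ 2 + s ^ 2) * ((k * t ^ 2 + r * s ^ 2) ^ 2 + ((r - k) * s * t) ^ 2) + r * k * (k ^ 2 + s ^ 2) * (((r - k) * t * t + (r - k) * s * (-s)) * (k * t ^ 2 + r * s ^ 2) - ((r - k) * s * t) * (k * (2 * t * (-s)) + r * (2 * s * t)))) = 0 := by
        linear_combination ((-1) * t^4 * k^4 + (-1) * s^2 * t^2 * k^4 + (-1) * t^2 * k^6 + (1) * t^2 * r^2 * k^4 + (-1) * t^2 * k^4 + (-1) * k^6 + (1) * r^2 * k^4 + (-1) * k^4 : ℝ) * hst + ((-1) * s^2 * k^4 + (1) * k^4 : ℝ) * hr2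
      apply mul_right_cancel₀ hQ
      rw [zero_mul, ← hP]
      generalize k * t ^ 2 + r * s ^ 2 = D at hDne ⊢
      field_simp
      ring
    convert hmain using 1
    linear_combination (-1 : ℝ) * key
  have hcont : Continuous fun φ => Real.arctan (Real.sin φ / k) * Real.sin φ := by
    exact ((Real.continuous_arctan.comp (Real.continuous_sin.div_const k)).mul Real.continuous_sin)
  have := intervalIntegral.integral_eq_sub_of_hasDerivAt
    (fun φ _ => hderiv φ) (hcont.intervalIntegrable 0 π)
  rw [this]
  simp [hF, Real.sin_pi, Real.cos_pi, Real.sin_zero, Real.cos_zero]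
  ring
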